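/- Let ξ ∈ ℝ^n, m a positive integer, t = lcm(m,n), and define Π^n_m := (m/t)·(I_m ⊗ 1^T_{t/m})·(I_n ⊗ 1_{t/n}) ∈ M_{m×n}. Then x₀ := Π^n_m ξ is the unique minimizer over x ∈ ℝ^m of ‖ξ − x‖_V, i.e., x₀ = argmin_{x ∈ ℝ^m} ‖ξ − x‖_V. -/

import Mathlib

open scoped BigOperators

/-- `rep t x` is `x ⊗ 1_{t/m}`: each entry of `x ∈ ℝ^m` repeated `t/m` consecutive times. -/
noncomputable def rep (t : ℕ) {m : ℕ} (x : Fin m → ℝ) : Fin t → ℝ :=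
  fun i => if h : i.1 / (t / m) < m then x ⟨i.1 / (t / m), h⟩ else 0

/-- Cross-dimensional norm `‖x‖_V = sqrt((1/n) Σ xᵢ²)`. -/
noncomputable def vnorm {n : ℕ} (x : Fin n → ℝ) : ℝ :=
  Real.sqrt ((1 / (n : ℝ)) * ∑ i, x i ^ 2)

/-- Cross-dimensional inner product `⟨x,y⟩_V`. -/
noncomputable def vinner {m n : ℕ} (x : Fin m → ℝ) (y : Fin n → ℝ) : ℝ :=
  (1 / (Nat.lcm m n : ℝ)) * ∑ i, rep (Nat.lcm m n) x i * rep (Nat.lcm m n) y i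

/-- Cross-dimensional distance `d_V(x,y) = ‖x ⊖ y‖_V`. -/
noncomputable def dV {m n : ℕ} (x : Fin m → ℝ) (y : Fin n → ℝ) : ℝ :=
  vnorm (rep (Nat.lcm m n) x - rep (Nat.lcm m n) y)

/-- `onesRepMat m t` is `I_m ⊗ 1ᵀ_{t/m}` (an `m × t` matrix, for `m ∣ t`). -/
noncomputable def onesRepMat (m t : ℕ) : Matrix (Fin m) (Fin t) ℝ :=
  Matrix.of fun i j => if j.1 / (t / m) = i.1 then (1 : ℝ) else 0

/-- `PiMat n m` is the cross-dimensional projection matrix `Π^n_m : ℝ^n → ℝ^m`,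
`Π^n_m = (m/t)(I_m ⊗ 1ᵀ_{t/m})(I_n ⊗ 1_{t/n})`, `t = lcm(m,n)`. -/
noncomputable def PiMat (n m : ℕ) : Matrix (Fin m) (Fin n) ℝ :=
  ((m : ℝ) / (Nat.lcm m n : ℝ)) •
    (onesRepMat m (Nat.lcm m n) * (onesRepMat n (Nat.lcm m n)).transpose)

/-- `A ⊗ 1ᵀ_{t/n}` for `A ∈ M_{m×n}` (an `m × t` matrix). -/
noncomputable def repCols {m n : ℕ} (t : ℕ) (A : Matrix (Fin m) (Fin n) ℝ) :
    Matrix (Fin m) (Fin t) ℝ :=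
  Matrix.of fun i j => if h : j.1 / (t / n) < n then A i ⟨j.1 / (t / n), h⟩ else 0

/-- `B ⊗ 1_{t/p}` for `B ∈ M_{p×q}` (a `t × q` matrix). -/
noncomputable def repRows {p q : ℕ} (t : ℕ) (B : Matrix (Fin p) (Fin q) ℝ) :
    Matrix (Fin t) (Fin q) ℝ :=
  Matrix.of fun j l => if h : j.1 / (t / p) < p then B ⟨j.1 / (t / p), h⟩ l else 0

/-- Weighted dimension-keeping semi-tensor product
`A ⋉̄ B = (n/t)(A ⊗ 1ᵀ_{t/n})(B ⊗ 1_{t/p})`, `t = lcm(n,p)`. -/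
noncomputable def dkstp {m n p q : ℕ} (A : Matrix (Fin m) (Fin n) ℝ)
    (B : Matrix (Fin p) (Fin q) ℝ) : Matrix (Fin m) (Fin q) ℝ :=
  ((n : ℝ) / (Nat.lcm n p : ℝ)) • (repCols (Nat.lcm n p) A * repRows (Nat.lcm n p) B)

/-- Bridge matrix `Ψ_{n×p} = (n/t)(I_n ⊗ 1ᵀ_{t/n})(I_p ⊗ 1_{t/p})`, `t = lcm(n,p)`. -/
noncomputable def Psi (n p : ℕ) : Matrix (Fin n) (Fin p) ℝ :=
  ((n : ℝ) / (Nat.lcm n p : ℝ)) •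
    (onesRepMat n (Nat.lcm n p) * (onesRepMat p (Nat.lcm n p)).transpose)


lemma idx_lt {m d t : ℕ} (h : m * d = t) (a : Fin m) (b : Fin d) :
    a.1 * d + b.1 < t := by
  subst h
  calc a.1 * d + b.1 < a.1 * d + d := by omega
    _ = (a.1 + 1) * d := by ring
    _ ≤ m * d := Nat.mul_le_mul_right d a.2

lemma div_add (d : ℕ) (hd : 0 < d) {a b : ℕ} (hb : b < d) : (a * d + b) / d = a := by
  rw [mul_comm, Nat.mul_add_div hd, Nat.div_eq_of_lt hb, add_zero]

lemma mod_add (d : ℕ) {a b : ℕ} (hb : b < d) : (a * d + b) % d = b := by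
  rw [mul_comm, Nat.mul_add_mod, Nat.mod_eq_of_lt hb]

lemma sum_blocks {m d t : ℕ} (hd : 0 < d) (h : m * d = t) (f : Fin t → ℝ) :
    ∑ j, f j = ∑ a : Fin m, ∑ b : Fin d, f ⟨a.1 * d + b.1, idx_lt h a b⟩ := by
  have e1 : (∑ p : Fin m × Fin d, f ⟨p.1.1 * d + p.2.1, idx_lt h p.1 p.2⟩)
      = ∑ a : Fin m, ∑ b : Fin d, f ⟨a.1 * d + b.1, idx_lt h a b⟩ :=
    Fintype.sum_prod_type (f := fun p : Fin m × Fin d => f ⟨p.1.1 * d + p.2.1, idx_lt h p.1 p.2⟩)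
  rw [← e1]
  symm
  refine Fintype.sum_bijective
    (fun p : Fin m × Fin d => (⟨p.1.1 * d + p.2.1, idx_lt h p.1 p.2⟩ : Fin t)) ?_ _ _
    (fun p => rfl)
  rw [Fintype.bijective_iff_injective_and_card]
  constructor
  · intro p q hpq
    have h1 : p.1.1 * d + p.2.1 = q.1.1 * d + q.2.1 := congrArg Fin.val hpq
    have h2 : p.1.1 = q.1.1 := by
      have := congrArg (· / d) h1
      simpa [div_add d hd p.2.2, div_add d hd q.2.2] using this
    have h3 : p.2.1 = q.2.1 := by rw [h2] at h1; omega
    exact Prod.ext (Fin.ext h2) (Fin.ext h3)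
  · simp [h]

lemma rep_apply {t m d : ℕ} (hd : 0 < d) (hdm : t / m = d) (x : Fin m → ℝ)
    (a : Fin m) (b : Fin d) (hlt : a.1 * d + b.1 < t) :
    rep t x ⟨a.1 * d + b.1, hlt⟩ = x a := by
  have h1 : (a.1 * d + b.1) / (t / m) = a.1 := by rw [hdm]; exact div_add d hd b.2
  unfold rep
  simp only [h1]
  rw [dif_pos a.2]

lemma sum_ind_block {m d t : ℕ} (hd : 0 < d) (h : m * d = t) (g : Fin t → ℝ) (a : Fin m) :
    (∑ j : Fin t, if j.1 / d = a.1 then g j else 0)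
      = ∑ b : Fin d, g ⟨a.1 * d + b.1, idx_lt h a b⟩ := by
  rw [sum_blocks hd h]
  have step : ∀ a' : Fin m,
      (∑ b : Fin d, if (a'.1 * d + b.1) / d = a.1 then g ⟨a'.1 * d + b.1, idx_lt h a' b⟩ else 0)
        = if a' = a then ∑ b : Fin d, g ⟨a'.1 * d + b.1, idx_lt h a' b⟩ else 0 := by
    intro a'
    have hdiv : ∀ b : Fin d, (a'.1 * d + b.1) / d = a'.1 := fun b => div_add d hd b.2
    simp only [hdiv]
    by_cases hc : a' = a
    · subst hc; simp
    · simp [Fin.val_inj, hc]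
  simp only [step, Finset.sum_ite_eq', Finset.mem_univ, if_true]

lemma sum_sq_decomp {d : ℕ} (u : Fin d → ℝ) (c μ : ℝ) (hμ : ∑ b, u b = d * μ) :
    ∑ b, (u b - c) ^ 2 = (∑ b, (u b - μ) ^ 2) + d * (μ - c) ^ 2 := by
  have e1 : ∀ x : ℝ, ∑ b, (u b - x) ^ 2
      = (∑ b, (u b) ^ 2) - (2 * x) * (∑ b, u b) + d * x ^ 2 := by
    intro x
    have hb : ∀ b, (u b - x) ^ 2 = (u b) ^ 2 - (2 * x) * (u b) + x ^ 2 := fun b => by ring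
    simp only [hb]
    rw [Finset.sum_add_distrib, Finset.sum_sub_distrib, ← Finset.mul_sum, Finset.sum_const,
      Finset.card_univ, Fintype.card_fin, nsmul_eq_mul]
  rw [e1 c, e1 μ, hμ]; ring

lemma x0_apply (n m : ℕ) (hn : 0 < n) (hm : 0 < m) (ξ : Fin n → ℝ) (a : Fin m) :
    (PiMat n m).mulVec ξ a
      = ((m : ℝ) / (Nat.lcm n m : ℝ)) *
        ∑ j : Fin (Nat.lcm n m),
          (if j.1 / (Nat.lcm n m / m) = a.1 then rep (Nat.lcm n m) ξ j else 0) := by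
  unfold PiMat
  rw [Nat.lcm_comm m n]
  have htpos : 0 < Nat.lcm n m := Nat.pos_of_ne_zero (Nat.lcm_ne_zero hn.ne' hm.ne')
  have hne : n * (Nat.lcm n m / n) = Nat.lcm n m := Nat.mul_div_cancel' (Nat.dvd_lcm_left n m)
  set T := Nat.lcm n m with hT
  simp only [Matrix.smul_mulVec, Pi.smul_apply, smul_eq_mul]
  congr 1
  simp only [Matrix.mulVec, dotProduct, Matrix.mul_apply, Matrix.transpose_apply,
    onesRepMat, Matrix.of_apply, Finset.sum_mul]
  rw [Finset.sum_comm]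
  refine Finset.sum_congr rfl fun j _ => ?_
  have hjn : j.1 / (T / n) < n := by
    rw [Nat.div_lt_iff_lt_mul]
    · rw [hne]; exact j.2
    · exact Nat.div_pos (Nat.le_of_dvd htpos (Nat.dvd_lcm_left n m)) hn
  by_cases hc : j.1 / (T / m) = a.1
  · simp only [if_pos hc, one_mul]
    have hl : ∀ l : Fin n,
        (if j.1 / (T / n) = l.1 then (1:ℝ) else 0) * ξ l
          = if l = ⟨j.1 / (T / n), hjn⟩ then ξ l else 0 := by
      intro l
      by_cases h' : l = ⟨j.1 / (T / n), hjn⟩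
      · subst h'; simp
      · have : ¬ (j.1 / (T / n) = l.1) := fun hh => h' (Fin.ext hh.symm)
        simp [this, h']
    simp only [hl, Finset.sum_ite_eq', Finset.mem_univ, if_true]
    unfold rep
    rw [dif_pos hjn]
  · simp only [if_neg hc, zero_mul, Finset.sum_const_zero]

/-- `Π^n_m ξ` is the unique minimizer of `‖ξ − x‖_V` over `x ∈ ℝ^m`. -/
theorem stmt7 (n m : ℕ) (hn : 0 < n) (hm : 0 < m) (ξ : Fin n → ℝ) :
    (∀ x : Fin m → ℝ, dV ξ ((PiMat n m).mulVec ξ) ≤ dV ξ x) ∧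
      (∀ x : Fin m → ℝ, dV ξ x = dV ξ ((PiMat n m).mulVec ξ) →
        x = (PiMat n m).mulVec ξ) := by
  have hmd : m ∣ Nat.lcm n m := Nat.dvd_lcm_right n m
  have htpos : 0 < Nat.lcm n m := Nat.pos_of_ne_zero (Nat.lcm_ne_zero hn.ne' hm.ne')
  set t := Nat.lcm n m with ht
  set d := t / m with hd
  have hdpos : 0 < d := Nat.div_pos (Nat.le_of_dvd htpos hmd) hm
  have htm : m * d = t := Nat.mul_div_cancel' hmd
  set x₀ := (PiMat n m).mulVec ξ with hx0
  set Y : Fin m → Fin d → ℝ := fun a b => rep t ξ ⟨a.1 * d + b.1, idx_lt htm a b⟩ with hY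
  have hS : ∀ x : Fin m → ℝ, (∑ j : Fin t, (rep t ξ j - rep t x j) ^ 2)
      = ∑ a, ∑ b, (Y a b - x a) ^ 2 := by
    intro x
    rw [sum_blocks hdpos htm]
    refine Finset.sum_congr rfl fun a _ => Finset.sum_congr rfl fun b _ => ?_
    rw [rep_apply hdpos hd.symm x a b]
  have hmt : (m : ℝ) * (d : ℝ) = (t : ℝ) := by exact_mod_cast congrArg (Nat.cast (R := ℝ)) htm
  have ht0 : (t : ℝ) ≠ 0 := Nat.cast_ne_zero.mpr htpos.ne'
  have hmean : ∀ a : Fin m, ∑ b, Y a b = (d : ℝ) * x₀ a := by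
    intro a
    have h1 := x0_apply n m hn hm ξ a
    rw [← ht, ← hd] at h1
    rw [sum_ind_block hdpos htm (rep t ξ) a] at h1
    rw [hx0, h1, ← mul_assoc,
      show (d : ℝ) * ((m : ℝ) / (t : ℝ)) = 1 from by field_simp; linear_combination hmt,
      one_mul]
  have hkey : ∀ x : Fin m → ℝ, (∑ a, ∑ b, (Y a b - x a) ^ 2)
      = (∑ a, ∑ b, (Y a b - x₀ a) ^ 2) + (d : ℝ) * ∑ a, (x₀ a - x a) ^ 2 := by
    intro x
    rw [Finset.mul_sum, ← Finset.sum_add_distrib]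
    exact Finset.sum_congr rfl fun a _ => sum_sq_decomp (Y a) (x a) (x₀ a) (hmean a)
  have hdV : ∀ x : Fin m → ℝ, dV ξ x
      = Real.sqrt ((1 / (t : ℝ)) * ∑ j : Fin t, (rep t ξ j - rep t x j) ^ 2) := by
    intro x
    simp [dV, vnorm, ← ht, Pi.sub_apply]
    exact Or.inl rfl
  constructor
  · intro x
    rw [hdV x, hdV x₀]
    apply Real.sqrt_le_sqrt
    rw [hS x, hS x₀, hkey x]
    have hQ : 0 ≤ (d : ℝ) * ∑ a, (x₀ a - x a) ^ 2 :=
      mul_nonneg (Nat.cast_nonneg d) (Finset.sum_nonneg fun a _ => sq_nonneg _)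
    have ht1 : (0 : ℝ) ≤ 1 / (t : ℝ) := by positivity
    exact mul_le_mul_of_nonneg_left (le_add_of_nonneg_right hQ) ht1
  · intro x hx
    rw [hdV x, hdV x₀] at hx
    have hx1 : (0:ℝ) ≤ (1 / (t : ℝ)) * ∑ j : Fin t, (rep t ξ j - rep t x j) ^ 2 := by positivity
    have hx2 : (0:ℝ) ≤ (1 / (t : ℝ)) * ∑ j : Fin t, (rep t ξ j - rep t x₀ j) ^ 2 := by positivity
    have h1 := (Real.sqrt_inj hx1 hx2).mp hx
    have ht1 : (1 / (t : ℝ)) ≠ 0 := by positivity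
    have h2 := mul_left_cancel₀ ht1 h1
    rw [hS x, hS x₀, hkey x] at h2
    have h3 : (d : ℝ) * ∑ a, (x₀ a - x a) ^ 2 = 0 := by linarith
    have hd0 : (d : ℝ) ≠ 0 := Nat.cast_ne_zero.mpr hdpos.ne'
    have h4 : ∑ a, (x₀ a - x a) ^ 2 = 0 := by
      rcases mul_eq_zero.mp h3 with h | h
      · exact absurd h hd0
      · exact h
    funext a
    have h5 := (Finset.sum_eq_zero_iff_of_nonneg (fun a _ => sq_nonneg _)).mp h4 a
      (Finset.mem_univ a)
    have h6 : x₀ a - x a = 0 := by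
      have := sq_eq_zero_iff.mp h5
      exact this
    linarith [h6]
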